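/- Let p > 1, R > 1, T > 0, and let a, b ∈ ℝ lie in one of the parameter regions of the definition of E₂(T) below. Define the weight w(|x|,t) := 1 if a > 0; (log(t+|x|+3R))⁻¹ if a = 0; (t+|x|+3R)^a if a < 0, the weighted norm ‖U‖₂ := sup_{(x,t)∈ℝ×[0,T]} w(|x|,t)|U(x,t)|, and L(V)(x,t) := (1/2)∫₀^t ∫_{x−t+s}^{x+t−s} V(y,s) ⟨s+⟨y⟩⟩^{−(1+a)} ⟨s−⟨y⟩⟩^{−(1+b)} dy ds. Define E₂(T) := 1 if a+b > 0 and a > 0; log^p(T+3R) if a = 0 and b > 0; log(T+3R) if a+b = 0 and a > 0; log^{p+1}(T+3R) if a = b = 0; (T+2R)^{−pa} if a < 0 and b > 0; (T+2R)^{−pa} log(T+3R) if a < 0 and b = 0; (T+2R)^{−(pa+b)} if a < 0 and b < 0; log^{p−1}(T+3R)(T+R)^{−b} if a = 0 and b < 0; (T+2R)^{−(a+b)} if a+b < 0 and a > 0. Then there exists C₃ = C₃(p,a,b,R) > 0 such that for every U ∈ C(ℝ×[0,T]) with supp U ⊂ {|x| ≤ t+R}, one has ‖L(|U|^p)‖₂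 ≤ C₃ ‖U‖₂^p E₂(T). -/
import Mathlib


open Real MeasureTheory Set
open scoped Classical

noncomputable section

/-- The Japanese bracket `⟨x⟩ = (1+x²)^{1/2}`. -/
def jap (x : ℝ) : ℝ := Real.sqrt (1 + x ^ 2)

/-- The characteristic weight `F(x,t) = ⟨t+⟨x⟩⟩^{-(1+a)} ⟨t-⟨x⟩⟩^{-(1+b)}`. -/
def cweight (a b x t : ℝ) : ℝ :=
  jap (t + jap x) ^ (-(1 + a)) * jap (t - jap x) ^ (-(1 + b))

/-- The Duhamel integral operator with the characteristic weight. -/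
def duhamel (a b : ℝ) (V : ℝ → ℝ → ℝ) (x t : ℝ) : ℝ :=
  (∫ s in (0:ℝ)..t, ∫ y in (x - t + s)..(x + t - s), V y s * cweight a b y s) / 2

/-- The weight `w(|x|,t)` of Section 4. -/
def wfun (a R x t : ℝ) : ℝ :=
  if 0 < a then 1
  else if a = 0 then (Real.log (t + |x| + 3 * R))⁻¹
  else (t + |x| + 3 * R) ^ a

/-- The quantity `E₂(T)` from Lemma 4.2. -/
def E2 (p a b R T : ℝ) : ℝ :=
  if 0 < a + b ∧ 0 < a then 1
  else if a = 0 ∧ 0 < b then Real.log (T + 3 * R) ^ p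
  else if a + b = 0 ∧ 0 < a then Real.log (T + 3 * R)
  else if a = 0 ∧ b = 0 then Real.log (T + 3 * R) ^ (p + 1)
  else if a < 0 ∧ 0 < b then (T + 2 * R) ^ (-(p * a))
  else if a < 0 ∧ b = 0 then (T + 2 * R) ^ (-(p * a)) * Real.log (T + 3 * R)
  else if a < 0 ∧ b < 0 then (T + 2 * R) ^ (-(p * a + b))
  else if a = 0 ∧ b < 0 then Real.log (T + 3 * R) ^ (p - 1) * (T + R) ^ (-b)
  else (T + 2 * R) ^ (-(a + b))

lemma one_le_jap (x : ℝ) : 1 ≤ jap x := by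
  rw [jap]
  exact Real.one_le_sqrt.mpr (by nlinarith [sq_nonneg x])

lemma jap_pos (x : ℝ) : 0 < jap x := lt_of_lt_of_le one_pos (one_le_jap x)

lemma abs_le_jap (x : ℝ) : |x| ≤ jap x := by
  rw [jap, show |x| = Real.sqrt (x^2) by rw [Real.sqrt_sq_eq_abs]]
  exact Real.sqrt_le_sqrt (by linarith)

lemma self_le_jap (x : ℝ) : x ≤ jap x := (le_abs_self x).trans (abs_le_jap x)

lemma jap_le (x : ℝ) : jap x ≤ 1 + |x| := by
  rw [jap]
  have h : 1 + x^2 ≤ (1+|x|)^2 := by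
    have := abs_nonneg x
    have : x^2 = |x|^2 := (sq_abs x).symm
    nlinarith [abs_nonneg x, sq_abs x]
  calc Real.sqrt (1+x^2) ≤ Real.sqrt ((1+|x|)^2) := Real.sqrt_le_sqrt h
    _ = 1+|x| := Real.sqrt_sq (by positivity)

/-- comparison of rpow with comparable bases -/

lemma rpow_comp {u v K : ℝ} (c : ℝ) (hu : 0 < u) (hv : 0 < v) (hK : 1 ≤ K)
    (h1 : u ≤ K * v) (h2 : v ≤ K * u) : u ^ c ≤ K ^ |c| * v ^ c := by
  rcases le_or_gt 0 c with hc | hc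
  · rw [abs_of_nonneg hc]
    calc u ^ c ≤ (K * v) ^ c := Real.rpow_le_rpow hu.le h1 hc
      _ = K ^ c * v ^ c := Real.mul_rpow (by positivity) hv.le
  · rw [abs_of_neg hc]
    have hKv : (0:ℝ) < v / K := by positivity
    have h3 : v / K ≤ u := (div_le_iff₀ (by positivity)).2 (by linarith [h2])
    calc u ^ c ≤ (v / K) ^ c := Real.rpow_le_rpow_of_nonpos hKv h3 hc.le
      _ = v ^ c / K ^ c := Real.div_rpow hv.le (by positivity) c
      _ = K ^ (-c) * v ^ c := by
          rw [Real.rpow_neg (by positivity)]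
          field_simp

/-- for `1 ≤ w ≤ W`, `w ^ c ≤ W ^ |c|` -/

lemma rpow_le_max {w W : ℝ} (c : ℝ) (hw : 1 ≤ w) (hW : w ≤ W) : w ^ c ≤ W ^ |c| := by
  have hW1 : 1 ≤ W := hw.trans hW
  rcases le_or_gt 0 c with hc | hc
  · rw [abs_of_nonneg hc]
    exact Real.rpow_le_rpow (by linarith) hW hc
  · rw [abs_of_neg hc]
    calc w ^ c ≤ 1 ^ c := Real.rpow_le_rpow_of_nonpos one_pos hw hc.le
      _ = 1 := Real.one_rpow c
      _ ≤ W ^ (-c) := Real.one_le_rpow hW1 (by linarith)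

lemma integral_one_add_rpow {c t : ℝ} (ht : 0 ≤ t) (hc : c ≠ -1) :
    ∫ v in (0:ℝ)..t, (1+v) ^ c = ((1+t) ^ (c+1) - 1) / (c+1) := by
  have h := intervalIntegral.integral_comp_add_left (a := (0:ℝ)) (b := t)
    (fun u : ℝ => u ^ c) 1
  simp only [add_zero] at h
  rw [h, integral_rpow (Or.inr ⟨hc, by
    rw [Set.uIcc_of_le (by linarith : (1:ℝ) ≤ 1+t)]
    intro h0; exact absurd h0.1 (by norm_num)⟩)]
  rw [Real.one_rpow]

lemma integral_one_add_inv {t : ℝ} (ht : 0 ≤ t) :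
    ∫ v in (0:ℝ)..t, (1+v) ^ (-1 : ℝ) = Real.log (1+t) := by
  have h := intervalIntegral.integral_comp_add_left (a := (0:ℝ)) (b := t)
    (fun u : ℝ => u ^ (-1:ℝ)) 1
  simp only [add_zero] at h
  rw [h]
  have : ∀ u ∈ Set.uIcc (1:ℝ) (1+t), (fun u : ℝ => u ^ (-1:ℝ)) u = u⁻¹ := by
    intro u hu; exact Real.rpow_neg_one u
  rw [intervalIntegral.integral_congr this, integral_inv (by
    rw [Set.uIcc_of_le (by linarith : (1:ℝ) ≤ 1+t)]
    intro h0; exact absurd h0.1 (by norm_num))]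
  simp

lemma integral_one_add_rpow_le_of_lt {c t : ℝ} (ht : 0 ≤ t) (hc : c < -1) :
    ∫ v in (0:ℝ)..t, (1+v) ^ c ≤ (-1-c)⁻¹ := by
  rw [integral_one_add_rpow ht hc.ne]
  have h1 : (1+t) ^ (c+1) ≤ 1 :=
    Real.rpow_le_one_of_one_le_of_nonpos (by linarith) (by linarith)
  have h2 : (0:ℝ) ≤ (1+t) ^ (c+1) := Real.rpow_nonneg (by linarith) _
  have h4 : (0:ℝ) < -1-c := by linarith
  rw [div_le_iff_of_neg (by linarith : c+1 < 0)]
  have heq : (-1-c)⁻¹ * (c+1) = -1 := by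
    rw [inv_mul_eq_div, div_eq_iff (by linarith : -1-c ≠ 0)]; ring
  rw [heq]; linarith

lemma integral_one_add_rpow_le_of_gt {c t : ℝ} (ht : 0 ≤ t) (hc : -1 < c) :
    ∫ v in (0:ℝ)..t, (1+v) ^ c ≤ (1+t) ^ (c+1) / (c+1) := by
  rw [integral_one_add_rpow ht hc.ne']
  have h3 : (0:ℝ) < c+1 := by linarith
  rw [div_le_div_iff_of_pos_right h3]; linarith

lemma myLog_le_rpow_div {x ε : ℝ} (hx : 1 ≤ x) (hε : 0 < ε) : Real.log x ≤ x ^ ε / ε := by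
  have h1 : Real.log (x ^ ε) ≤ x ^ ε - 1 := Real.log_le_sub_one_of_pos (by positivity)
  rw [Real.log_rpow (by linarith)] at h1
  rw [le_div_iff₀ hε, mul_comm]
  nlinarith

lemma one_lt_logR {R z : ℝ} (hR : 1 < R) (hz : 0 ≤ z) : 1 < Real.log (z + 3*R) := by
  rw [Real.lt_log_iff_exp_lt (by linarith)]
  calc Real.exp 1 < 2.7182818286 := Real.exp_one_lt_d9
    _ ≤ z + 3*R := by nlinarith

lemma intervalIntegrable_powlog {e q R t : ℝ} (hR : 1 < R) (ht : 0 ≤ t) :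
    IntervalIntegrable (fun s => (1+s) ^ e * Real.log (s + 3*R) ^ q) volume 0 t := by
  apply ContinuousOn.intervalIntegrable
  rw [Set.uIcc_of_le ht]
  apply ContinuousOn.mul
  · apply ContinuousOn.rpow_const (by fun_prop)
    intro x hx; left; have := hx.1; intro h; linarith [h ▸ (by linarith : (0:ℝ) < 1 + x)]
  · apply ContinuousOn.rpow_const
    · apply ContinuousOn.log (by fun_prop)
      intro x hx; have := hx.1; intro h; linarith
    · intro x hx; left; have := hx.1
      have := one_lt_logR (z := x) hR this; intro h; linarith

lemma intervalIntegrable_pow1 {e t : ℝ} (ht : 0 ≤ t) :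
    IntervalIntegrable (fun s : ℝ => (1+s) ^ e) volume 0 t := by
  apply ContinuousOn.intervalIntegrable
  rw [Set.uIcc_of_le ht]
  apply ContinuousOn.rpow_const (by fun_prop)
  intro x hx; left; have := hx.1; intro h; linarith [h ▸ (by linarith : (0:ℝ) < 1 + x)]

lemma powlog_integral (R e q : ℝ) (hR : 1 < R) (hq : 0 ≤ q) :
    ∃ C, 0 < C ∧ ∀ t, 0 ≤ t →
      (∫ s in (0:ℝ)..t, (1+s) ^ e * Real.log (s + 3*R) ^ q)
        ≤ C * (if e < -1 then 1 else if e = -1 then Real.log (t + 3*R) ^ (q+1)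
               else (1+t) ^ (e+1) * Real.log (t + 3*R) ^ q) := by
  rcases lt_trichotomy e (-1) with he | he | he
  · -- e < -1 : absorb log into a small power
    set ε : ℝ := (-1-e)/(2*(q+1)) with hεdef
    have hε : 0 < ε := by
      apply div_pos (by linarith) (by linarith)
    set K : ℝ := Real.log (3*R) + 1/ε with hKdef
    have hlog3R : 1 < Real.log (3*R) := by
      have := one_lt_logR (z := 0) hR le_rfl; simpa using this
    have hK : 0 < K := by positivity
    have heq : e + ε * q < -1 := by
      have h1 : ε * q ≤ (-1-e)/2 := by
        rw [hεdef, div_mul_eq_mul_div, div_le_div_iff₀ (by linarith) (by norm_num)]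
        nlinarith
      linarith
    refine ⟨K ^ q * (-1-(e + ε*q))⁻¹, mul_pos (Real.rpow_pos_of_pos hK q) (inv_pos.2 (by linarith)), fun t ht => ?_⟩
    rw [if_pos he, mul_one]
    have hpt : ∀ s ∈ Set.Icc (0:ℝ) t,
        (1+s) ^ e * Real.log (s + 3*R) ^ q ≤ K ^ q * (1+s) ^ (e + ε*q) := by
      intro s hs
      have hs0 : 0 ≤ s := hs.1
      have h1s : (0:ℝ) < 1+s := by linarith
      have hLs : Real.log (s + 3*R) ≤ K * (1+s) ^ ε := by
        have e1 : s + 3*R ≤ 3*R*(1+s) := by nlinarith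
        have e2 : Real.log (s + 3*R) ≤ Real.log (3*R) + Real.log (1+s) := by
          calc Real.log (s + 3*R) ≤ Real.log (3*R*(1+s)) :=
                Real.log_le_log (by linarith) e1
            _ = Real.log (3*R) + Real.log (1+s) :=
                Real.log_mul (by linarith) (by linarith)
        have e3 : Real.log (1+s) ≤ (1+s) ^ ε / ε := myLog_le_rpow_div (by linarith) hε
        have e4 : (1:ℝ) ≤ (1+s) ^ ε := Real.one_le_rpow (by linarith) hε.le
        have e5 : Real.log (3*R) ≤ Real.log (3*R) * (1+s) ^ ε := by nlinarith
        calc Real.log (s + 3*R) ≤ Real.log (3*R) + (1+s) ^ ε / ε := by linarith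
          _ ≤ Real.log (3*R) * (1+s) ^ ε + (1/ε) * (1+s) ^ ε := by
              rw [div_eq_mul_inv, mul_comm ((1+s)^ε)]
              rw [one_div]
              linarith
          _ = K * (1+s) ^ ε := by rw [hKdef]; ring
      have h2 : Real.log (s + 3*R) ^ q ≤ (K * (1+s) ^ ε) ^ q := by
        apply Real.rpow_le_rpow _ hLs hq
        have := one_lt_logR (z := s) hR hs0; linarith
      have h3 : (K * (1+s) ^ ε) ^ q = K ^ q * (1+s) ^ (ε * q) := by
        rw [Real.mul_rpow hK.le (Real.rpow_nonneg h1s.le _), ← Real.rpow_mul h1s.le]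
      calc (1+s) ^ e * Real.log (s + 3*R) ^ q ≤ (1+s) ^ e * (K ^ q * (1+s) ^ (ε*q)) := by
            rw [← h3]
            exact mul_le_mul_of_nonneg_left h2 (Real.rpow_nonneg h1s.le _)
        _ = K ^ q * (1+s) ^ (e + ε*q) := by
            rw [Real.rpow_add h1s]; ring
    calc (∫ s in (0:ℝ)..t, (1+s) ^ e * Real.log (s + 3*R) ^ q)
        ≤ ∫ s in (0:ℝ)..t, K ^ q * (1+s) ^ (e + ε*q) := by
          apply intervalIntegral.integral_mono_on ht
            (intervalIntegrable_powlog hR ht)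
            ((intervalIntegrable_pow1 ht).const_mul _) hpt
      _ = K ^ q * ∫ s in (0:ℝ)..t, (1+s) ^ (e + ε*q) := by
          rw [intervalIntegral.integral_const_mul]
      _ ≤ K ^ q * (-1-(e + ε*q))⁻¹ := by
          apply mul_le_mul_of_nonneg_left
            (integral_one_add_rpow_le_of_lt ht heq) (by positivity)
  · -- e = -1
    subst he
    refine ⟨1, one_pos, fun t ht => ?_⟩
    rw [if_neg (lt_irrefl _), if_pos rfl, one_mul]
    have hLt : (0:ℝ) < Real.log (t + 3*R) := by
      have := one_lt_logR (z := t) hR ht; linarith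
    have hpt : ∀ s ∈ Set.Icc (0:ℝ) t,
        (1+s) ^ (-1:ℝ) * Real.log (s + 3*R) ^ q
          ≤ Real.log (t + 3*R) ^ q * (1+s) ^ (-1:ℝ) := by
      intro s hs
      rw [mul_comm]
      apply mul_le_mul_of_nonneg_right _ (Real.rpow_nonneg (by linarith [hs.1]) _)
      apply Real.rpow_le_rpow _ (Real.log_le_log (by linarith [hs.1]) (by linarith [hs.2])) hq
      have := one_lt_logR (z := s) hR hs.1; linarith
    calc (∫ s in (0:ℝ)..t, (1+s) ^ (-1:ℝ) * Real.log (s + 3*R) ^ q)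
        ≤ ∫ s in (0:ℝ)..t, Real.log (t + 3*R) ^ q * (1+s) ^ (-1:ℝ) := by
          apply intervalIntegral.integral_mono_on ht
            (intervalIntegrable_powlog hR ht)
            ((intervalIntegrable_pow1 ht).const_mul _) hpt
      _ = Real.log (t + 3*R) ^ q * Real.log (1+t) := by
          rw [intervalIntegral.integral_const_mul, integral_one_add_inv ht]
      _ ≤ Real.log (t + 3*R) ^ q * Real.log (t + 3*R) := by
          apply mul_le_mul_of_nonneg_left
            (Real.log_le_log (by linarith) (by linarith)) (Real.rpow_nonneg hLt.le q)
      _ = Real.log (t + 3*R) ^ (q+1) := by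
          rw [Real.rpow_add hLt, Real.rpow_one]
  · -- e > -1
    refine ⟨(e+1)⁻¹, inv_pos.2 (by linarith), fun t ht => ?_⟩
    rw [if_neg (by linarith), if_neg (by linarith)]
    have hLt : (0:ℝ) < Real.log (t + 3*R) := by
      have := one_lt_logR (z := t) hR ht; linarith
    have hpt : ∀ s ∈ Set.Icc (0:ℝ) t,
        (1+s) ^ e * Real.log (s + 3*R) ^ q
          ≤ Real.log (t + 3*R) ^ q * (1+s) ^ e := by
      intro s hs
      rw [mul_comm]
      apply mul_le_mul_of_nonneg_right _ (Real.rpow_nonneg (by linarith [hs.1]) _)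
      apply Real.rpow_le_rpow _ (Real.log_le_log (by linarith [hs.1]) (by linarith [hs.2])) hq
      have := one_lt_logR (z := s) hR hs.1; linarith
    calc (∫ s in (0:ℝ)..t, (1+s) ^ e * Real.log (s + 3*R) ^ q)
        ≤ ∫ s in (0:ℝ)..t, Real.log (t + 3*R) ^ q * (1+s) ^ e := by
          apply intervalIntegral.integral_mono_on ht
            (intervalIntegrable_powlog hR ht)
            ((intervalIntegrable_pow1 ht).const_mul _) hpt
      _ = Real.log (t + 3*R) ^ q * ∫ s in (0:ℝ)..t, (1+s) ^ e := by
          rw [intervalIntegral.integral_const_mul]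
      _ ≤ Real.log (t + 3*R) ^ q * ((1+t) ^ (e+1) / (e+1)) := by
          apply mul_le_mul_of_nonneg_left
            (integral_one_add_rpow_le_of_gt ht he) (Real.rpow_nonneg hLt.le q)
      _ = (e+1)⁻¹ * ((1+t) ^ (e+1) * Real.log (t + 3*R) ^ q) := by ring

lemma cont_rpow_pos {f : ℝ → ℝ} (c : ℝ) (hf : Continuous f) (h : ∀ x, 0 < f x) :
    Continuous fun x => f x ^ c :=
  continuous_iff_continuousAt.2 fun x =>
    (Real.continuousAt_rpow_const _ _ (Or.inl (h x).ne')).comp hf.continuousAt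

lemma integral_abs_comp {f : ℝ → ℝ} (hf : Continuous f) {m : ℝ} (hm : 0 ≤ m) :
    ∫ y in (-m)..m, f |y| = 2 * ∫ y in (0:ℝ)..m, f y := by
  have hint : ∀ u v : ℝ, IntervalIntegrable (fun y => f |y|) volume u v :=
    fun u v => ((hf.comp continuous_abs).intervalIntegrable u v)
  rw [← intervalIntegral.integral_add_adjacent_intervals (hint (-m) 0) (hint 0 m)]
  have h1 : ∫ y in (-m)..(0:ℝ), f |y| = ∫ y in (0:ℝ)..m, f |y| := by
    have h2 := intervalIntegral.integral_comp_neg (a := (0:ℝ)) (b := m) (fun y : ℝ => f |y|)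
    simp only [abs_neg, neg_zero] at h2
    exact h2.symm
  have h3 : ∫ y in (0:ℝ)..m, f |y| = ∫ y in (0:ℝ)..m, f y := by
    apply intervalIntegral.integral_congr
    intro y hy; rw [Set.uIcc_of_le hm] at hy; show f |y| = f y; rw [abs_of_nonneg hy.1]
  rw [h1, h3]; ring

lemma qint_bound (b R : ℝ) (hR : 1 < R) :
    ∃ C, 0 < C ∧ ∀ s, 0 ≤ s →
      (∫ y in (-(s+R))..(s+R), (1 + abs (s - |y|)) ^ (-(1+b)))
        ≤ C * (if b = 0 then Real.log (s + 3*R) else (1+s) ^ (-(min b 0))) := by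
  have hg : Continuous fun v : ℝ => (1 + |v|) ^ (-(1+b)) := by
    apply cont_rpow_pos _ (by fun_prop)
    intro x; have := abs_nonneg x; linarith
  have key : ∀ s, 0 ≤ s → (∫ y in (-(s+R))..(s+R), (1 + abs (s - |y|)) ^ (-(1+b)))
      = 2 * ∫ v in (-R)..s, (1 + |v|) ^ (-(1+b)) := by
    intro s hs
    have h1 : (∫ y in (-(s+R))..(s+R), (1 + abs (s - |y|)) ^ (-(1+b)))
        = 2 * ∫ y in (0:ℝ)..(s+R), (1 + |s - y|) ^ (-(1+b)) := by
      exact integral_abs_comp (f := fun z => (1 + |s - z|) ^ (-(1+b)))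
        (by apply cont_rpow_pos _ (by fun_prop); intro x; have := abs_nonneg (s-x); linarith)
        (by linarith)
    rw [h1]
    congr 1
    have h2 := intervalIntegral.integral_comp_sub_left (a := (0:ℝ)) (b := s+R)
      (fun v : ℝ => (1 + |v|) ^ (-(1+b))) s
    simp only [sub_zero] at h2
    rw [h2]
    norm_num
  -- bound for the part on [-R, 0]
  have hneg : ∀ s : ℝ, (∫ v in (-R)..(0:ℝ), (1 + |v|) ^ (-(1+b))) ≤ R * (1+R) ^ |1+b| := by
    intro s
    calc (∫ v in (-R)..(0:ℝ), (1 + |v|) ^ (-(1+b)))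
        ≤ ∫ _ in (-R)..(0:ℝ), (1+R) ^ |1+b| := by
          apply intervalIntegral.integral_mono_on (by linarith)
            (hg.intervalIntegrable _ _) intervalIntegrable_const
          intro v hv
          have hv1 : |v| ≤ R := by
            rw [abs_le]; exact ⟨by linarith [hv.1], by linarith [hv.2]⟩
          have := abs_nonneg v
          calc (1 + |v|) ^ (-(1+b)) ≤ (1+R) ^ |(-(1+b))| :=
                rpow_le_max _ (by linarith) (by linarith)
            _ = (1+R) ^ |1+b| := by rw [abs_neg]
      _ = R * (1+R) ^ |1+b| := by
          rw [intervalIntegral.integral_const]; simp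
  have hsplit : ∀ s, 0 ≤ s → (∫ v in (-R)..s, (1 + |v|) ^ (-(1+b)))
      = (∫ v in (-R)..(0:ℝ), (1 + |v|) ^ (-(1+b))) + ∫ v in (0:ℝ)..s, (1+v) ^ (-(1+b)) := by
    intro s hs
    rw [← intervalIntegral.integral_add_adjacent_intervals
      (hg.intervalIntegrable (-R) 0) (hg.intervalIntegrable 0 s)]
    congr 1
    apply intervalIntegral.integral_congr
    intro v hv; rw [Set.uIcc_of_le hs] at hv
    show (1 + |v|) ^ (-(1+b)) = (1 + v) ^ (-(1+b))
    rw [abs_of_nonneg hv.1]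
  have hCneg : 0 < R * (1+R) ^ |1+b| := by positivity
  rcases lt_trichotomy b 0 with hb | hb | hb
  · -- b < 0
    have h5 : (0:ℝ) < (-b)⁻¹ := inv_pos.2 (by linarith)
    refine ⟨2 * (R * (1+R) ^ |1+b| + (-b)⁻¹), by positivity, fun s hs => ?_⟩
    rw [key s hs, if_neg hb.ne, min_eq_left hb.le, hsplit s hs]
    have h2 : (∫ v in (0:ℝ)..s, (1+v) ^ (-(1+b))) ≤ (1+s) ^ (-b) / (-b) := by
      have := integral_one_add_rpow_le_of_gt (c := -(1+b)) hs (by linarith)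
      convert this using 2 <;> ring
    have h4 : (1:ℝ) ≤ (1+s) ^ (-b) := Real.one_le_rpow (by linarith) (by linarith)
    have h6 := hneg s
    rw [div_eq_mul_inv] at h2
    nlinarith
  · -- b = 0
    subst hb
    refine ⟨2 * (R * (1+R) ^ |1+(0:ℝ)| + 1), by positivity, fun s hs => ?_⟩
    rw [key s hs, if_pos rfl, hsplit s hs]
    have hL : 1 ≤ Real.log (s + 3*R) := (one_lt_logR hR hs).le
    have h2 : (∫ v in (0:ℝ)..s, (1+v) ^ (-(1+(0:ℝ)))) ≤ Real.log (s + 3*R) := by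
      have h3 : (-(1+(0:ℝ))) = (-1 : ℝ) := by norm_num
      rw [h3, integral_one_add_inv hs]
      exact Real.log_le_log (by linarith) (by linarith)
    have h6 := hneg s
    nlinarith
  · -- b > 0
    have h5 : (0:ℝ) < b⁻¹ := inv_pos.2 hb
    refine ⟨2 * (R * (1+R) ^ |1+b| + b⁻¹), by positivity, fun s hs => ?_⟩
    rw [key s hs, if_neg hb.ne', min_eq_right hb.le, neg_zero, Real.rpow_zero, mul_one,
      hsplit s hs]
    have h2 : (∫ v in (0:ℝ)..s, (1+v) ^ (-(1+b))) ≤ b⁻¹ := by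
      have := integral_one_add_rpow_le_of_lt (c := -(1+b)) hs (by linarith)
      convert this using 2; ring
    have h6 := hneg s
    linarith

lemma wfun_pos {a R x t : ℝ} (hR : 1 < R) (ht : 0 ≤ t) : 0 < wfun a R x t := by
  unfold wfun
  split_ifs with h1 h2
  · exact one_pos
  · apply inv_pos.2
    have := one_lt_logR (z := t + |x|) hR (by positivity)
    have e : t + |x| + 3*R = (t + |x|) + 3*R := by ring
    rw [e]; linarith
  · apply Real.rpow_pos_of_pos; have := abs_nonneg x; linarith

lemma F1part {a R : ℝ} (hR : 1 < R) {y s : ℝ} (hs : 0 ≤ s) (hy : |y| ≤ s + R) :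
    jap (s + jap y) ^ (-(1+a)) ≤ (R+3) ^ |1+a| * (1+s) ^ (-(1+a)) := by
  have hju := jap_pos (s + jap y)
  have hj1 := one_le_jap y
  have hjy := jap_le y
  have habs : |s + jap y| = s + jap y := abs_of_nonneg (by linarith)
  have hub : jap (s + jap y) ≤ (R+3) * (1+s) := by
    have := jap_le (s + jap y)
    rw [habs] at this
    nlinarith
  have hlb : 1 + s ≤ (R+3) * jap (s + jap y) := by
    have h1 : s + jap y ≤ jap (s + jap y) := self_le_jap _
    nlinarith
  have := rpow_comp (u := jap (s + jap y)) (v := 1+s) (K := R+3) (-(1+a))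
    hju (by linarith) (by linarith) hub hlb
  rwa [abs_neg] at this

lemma F2part {b : ℝ} {y s : ℝ} :
    jap (s - jap y) ^ (-(1+b)) ≤ 4 ^ |1+b| * (1 + abs (s - |y|)) ^ (-(1+b)) := by
  have hju := jap_pos (s - jap y)
  have hj1 := one_le_jap y
  have hjy := jap_le y
  have hay := abs_le_jap y
  have hd1 : |s - jap y| ≤ abs (s - |y|) + 1 := by
    have : s - jap y = (s - |y|) - (jap y - |y|) := by ring
    rw [this]
    have h2 : |(s - |y|) - (jap y - |y|)| ≤ abs (s - |y|) + abs (jap y - |y|) := abs_sub _ _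
    have h3 : abs (jap y - |y|) ≤ 1 := by rw [abs_of_nonneg (by linarith)]; linarith
    linarith
  have hd2 : abs (s - |y|) ≤ |s - jap y| + 1 := by
    have : s - |y| = (s - jap y) + (jap y - |y|) := by ring
    rw [this]
    have h2 : |(s - jap y) + (jap y - |y|)| ≤ |s - jap y| + abs (jap y - |y|) := abs_add_le _ _
    have h3 : abs (jap y - |y|) ≤ 1 := by rw [abs_of_nonneg (by linarith)]; linarith
    linarith
  have hub : jap (s - jap y) ≤ 4 * (1 + abs (s - |y|)) := by
    have := jap_le (s - jap y)
    have := abs_nonneg (s - |y|)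
    nlinarith
  have hlb : 1 + abs (s - |y|) ≤ 4 * jap (s - jap y) := by
    have h1 : |s - jap y| ≤ jap (s - jap y) := abs_le_jap _
    have h2 : 1 ≤ jap (s - jap y) := one_le_jap _
    nlinarith
  have := rpow_comp (u := jap (s - jap y)) (v := 1 + abs (s - |y|)) (K := 4) (-(1+b))
    hju (by positivity) (by norm_num) hub hlb
  rwa [abs_neg] at this

lemma Wpart (p a R : ℝ) (hp : 1 < p) (hR : 1 < R) :
    ∃ C, 0 < C ∧ ∀ (T : ℝ) (U : ℝ → ℝ → ℝ) (M : ℝ), 0 ≤ M →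
      (∀ x t : ℝ, 0 ≤ t → t ≤ T → wfun a R x t * |U x t| ≤ M) →
      ∀ y s : ℝ, 0 ≤ s → s ≤ T → |y| ≤ s + R →
      |U y s| ^ p ≤ C * M ^ p *
        ((1+s) ^ (-(p * min a 0)) * Real.log (s + 3*R) ^ (if a = 0 then p else (0:ℝ))) := by
  have hp0 : (0:ℝ) ≤ p := by linarith
  have base : ∀ (T : ℝ) (U : ℝ → ℝ → ℝ) (M : ℝ), 0 ≤ M →
      (∀ x t : ℝ, 0 ≤ t → t ≤ T → wfun a R x t * |U x t| ≤ M) →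
      ∀ y s : ℝ, 0 ≤ s → s ≤ T →
      |U y s| ^ p ≤ M ^ p * ((wfun a R y s)⁻¹) ^ p := by
    intro T U M hM hbd y s hs hsT
    have hw : 0 < wfun a R y s := wfun_pos hR hs
    have hU : |U y s| ≤ M * (wfun a R y s)⁻¹ := by
      rw [mul_comm, ← div_eq_inv_mul, le_div_iff₀ hw, mul_comm]
      exact hbd y s hs hsT
    calc |U y s| ^ p ≤ (M * (wfun a R y s)⁻¹) ^ p :=
          Real.rpow_le_rpow (abs_nonneg _) hU hp0
      _ = M ^ p * ((wfun a R y s)⁻¹) ^ p :=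
          Real.mul_rpow hM (by positivity)
  rcases lt_trichotomy a 0 with ha | ha | ha
  · -- a < 0
    refine ⟨(4*R) ^ (-(p*a)), Real.rpow_pos_of_pos (by linarith) _,
      fun T U M hM hbd y s hs hsT hy => ?_⟩
    have hX : (0:ℝ) < s + |y| + 3*R := by positivity
    have hw : wfun a R y s = (s + |y| + 3*R) ^ a := by
      rw [wfun, if_neg (by linarith), if_neg ha.ne]
    have hinv : ((wfun a R y s)⁻¹) ^ p = (s + |y| + 3*R) ^ ((-a)*p) := by
      rw [hw, ← Real.rpow_neg hX.le, ← Real.rpow_mul hX.le]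
    have hle : (s + |y| + 3*R) ^ ((-a)*p) ≤ (4*R) ^ ((-a)*p) * (1+s) ^ ((-a)*p) := by
      rw [← Real.mul_rpow (by positivity) (by positivity)]
      apply Real.rpow_le_rpow hX.le (by nlinarith) (by nlinarith)
    have hmin : min a 0 = a := min_eq_left ha.le
    rw [if_neg ha.ne, Real.rpow_zero, mul_one, hmin]
    have e1 : (-a)*p = -(p*a) := by ring
    calc |U y s| ^ p ≤ M ^ p * ((wfun a R y s)⁻¹) ^ p := base T U M hM hbd y s hs hsT
      _ ≤ M ^ p * ((4*R) ^ ((-a)*p) * (1+s) ^ ((-a)*p)) := by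
          rw [hinv]
          exact mul_le_mul_of_nonneg_left hle (Real.rpow_nonneg hM _)
      _ = (4*R) ^ (-(p*a)) * M ^ p * (1+s) ^ (-(p*a)) := by rw [e1]; ring
  · -- a = 0
    subst ha
    refine ⟨(2:ℝ) ^ p, Real.rpow_pos_of_pos two_pos _, fun T U M hM hbd y s hs hsT hy => ?_⟩
    have hX : (0:ℝ) < s + |y| + 3*R := by positivity
    have hw : wfun 0 R y s = (Real.log (s + |y| + 3*R))⁻¹ := by
      rw [wfun, if_neg (lt_irrefl 0), if_pos rfl]
    have hlog1 : 1 < Real.log (s + |y| + 3*R) := by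
      have := one_lt_logR (z := s + |y|) hR (by positivity)
      have e : s + |y| + 3*R = (s + |y|) + 3*R := by ring
      rw [e]; linarith
    have hL1 : 1 < Real.log (s + 3*R) := one_lt_logR hR hs
    have hlog : Real.log (s + |y| + 3*R) ≤ 2 * Real.log (s + 3*R) := by
      have h1 : Real.log (s + |y| + 3*R) ≤ Real.log (2*(s + 3*R)) :=
        Real.log_le_log hX (by nlinarith)
      have h2 : Real.log (2*(s + 3*R)) = Real.log 2 + Real.log (s + 3*R) :=
        Real.log_mul two_ne_zero (by positivity)
      have h3 : Real.log 2 ≤ Real.log (s + 3*R) :=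
        Real.log_le_log two_pos (by nlinarith)
      linarith
    have hpow : (Real.log (s + |y| + 3*R)) ^ p ≤ (2:ℝ)^p * Real.log (s + 3*R) ^ p := by
      rw [← Real.mul_rpow (by norm_num) (by linarith)]
      exact Real.rpow_le_rpow (by linarith) hlog hp0
    rw [if_pos rfl]
    have hmin : min (0:ℝ) 0 = 0 := min_self 0
    rw [hmin, mul_zero, neg_zero, Real.rpow_zero, one_mul]
    calc |U y s| ^ p ≤ M ^ p * ((wfun 0 R y s)⁻¹) ^ p := base T U M hM hbd y s hs hsT
      _ = M ^ p * (Real.log (s + |y| + 3*R)) ^ p := by rw [hw, inv_inv]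
      _ ≤ M ^ p * ((2:ℝ)^p * Real.log (s + 3*R) ^ p) :=
          mul_le_mul_of_nonneg_left hpow (Real.rpow_nonneg hM _)
      _ = (2:ℝ)^p * M ^ p * Real.log (s + 3*R) ^ p := by ring
  · -- a > 0
    refine ⟨1, one_pos, fun T U M hM hbd y s hs hsT hy => ?_⟩
    have hw : wfun a R y s = 1 := by rw [wfun, if_pos ha]
    have hmin : min a 0 = 0 := min_eq_right ha.le
    rw [if_neg ha.ne', Real.rpow_zero, mul_one, hmin, mul_zero, neg_zero,
      Real.rpow_zero, mul_one, one_mul]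
    calc |U y s| ^ p ≤ M ^ p * ((wfun a R y s)⁻¹) ^ p := base T U M hM hbd y s hs hsT
      _ = M ^ p := by rw [hw]; simp

lemma continuous_jap : Continuous jap :=
  Real.continuous_sqrt.comp (by continuity)

lemma cweight_nonneg (a b x t : ℝ) : 0 ≤ cweight a b x t := by
  unfold cweight
  exact mul_nonneg (Real.rpow_nonneg (jap_pos _).le _) (Real.rpow_nonneg (jap_pos _).le _)

lemma cont_cweight (a b s : ℝ) : Continuous fun y : ℝ => cweight a b y s := by
  unfold cweight
  apply Continuous.mul
  · exact cont_rpow_pos _ (continuous_jap.comp (continuous_const.add continuous_jap))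
      (fun y => jap_pos _)
  · exact cont_rpow_pos _ (continuous_jap.comp (continuous_const.sub continuous_jap))
      (fun y => jap_pos _)

lemma cont_abs_rpow {f : ℝ → ℝ} (p : ℝ) (hp : 0 < p) (hf : Continuous f) :
    Continuous fun x => |f x| ^ p :=
  continuous_iff_continuousAt.2 fun x =>
    (Real.continuousAt_rpow_const _ _ (Or.inr hp.le)).comp (hf.abs.continuousAt)

lemma inner_bound (p a b R : ℝ) (hp : 1 < p) (hR : 1 < R) :
    ∃ C, 0 < C ∧ ∀ (T : ℝ), 0 < T → ∀ (U : ℝ → ℝ → ℝ),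
      ContinuousOn (fun q : ℝ × ℝ => U q.1 q.2) (Set.univ ×ˢ Set.Icc 0 T) →
      (∀ x t : ℝ, 0 ≤ t → t ≤ T → t + R < |x| → U x t = 0) →
      ∀ M : ℝ, 0 ≤ M →
      (∀ x t : ℝ, 0 ≤ t → t ≤ T → wfun a R x t * |U x t| ≤ M) →
      ∀ x t s : ℝ, 0 ≤ s → s ≤ t → t ≤ T →
      (∫ y in (x - t + s)..(x + t - s), |U y s| ^ p * cweight a b y s)
        ≤ C * M ^ p *
          ((1+s) ^ (-(1+a) - p * min a 0 - min b 0)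
            * Real.log (s + 3*R) ^ ((if a = 0 then p else (0:ℝ)) + (if b = 0 then (1:ℝ) else 0))) := by
  obtain ⟨CW, hCW, HW⟩ := Wpart p a R hp hR
  obtain ⟨CQ, hCQ, HQ⟩ := qint_bound b R hR
  have hK2 : (0:ℝ) < (R+3) ^ |1+a| := Real.rpow_pos_of_pos (by linarith) _
  have hK3 : (0:ℝ) < (4:ℝ) ^ |1+b| := Real.rpow_pos_of_pos (by norm_num) _
  refine ⟨CW * (R+3) ^ |1+a| * (4:ℝ) ^ |1+b| * CQ,
    mul_pos (mul_pos (mul_pos hCW hK2) hK3) hCQ,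
    fun T hT U hU hsupp M hM hbd x t s hs hst htT => ?_⟩
  have hsT : s ≤ T := hst.trans htT
  set m : ℝ := s + R with hmdef
  have hm : 0 < m := by rw [hmdef]; linarith
  set g : ℝ → ℝ := fun y => |U y s| ^ p * cweight a b y s with hgdef
  have h1s : (0:ℝ) < 1 + s := by linarith
  have hL : (1:ℝ) < Real.log (s + 3*R) := one_lt_logR hR hs
  -- continuity of g
  have hUc : Continuous fun y : ℝ => U y s := by
    have h1 : Continuous fun y : ℝ => ((y, s) : ℝ × ℝ) := continuous_id.prodMk continuous_const
    have := hU.comp_continuous h1 (fun y => by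
      exact Set.mem_prod.2 ⟨Set.mem_univ _, Set.mem_Icc.2 ⟨hs, hsT⟩⟩)
    exact this
  have hgc : Continuous g :=
    (cont_abs_rpow p (by linarith) hUc).mul (cont_cweight a b s)
  have hg0 : ∀ y, 0 ≤ g y := fun y =>
    mul_nonneg (Real.rpow_nonneg (abs_nonneg _) _) (cweight_nonneg a b y s)
  have hgz : ∀ y, m < |y| → g y = 0 := by
    intro y hy
    have hz : U y s = 0 := hsupp y s hs hsT (by rw [hmdef] at hy; linarith)
    show |U y s| ^ p * cweight a b y s = 0
    rw [hz, abs_zero, Real.zero_rpow (by linarith : p ≠ 0), zero_mul]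
  have hcs : HasCompactSupport g := by
    apply HasCompactSupport.intro (isCompact_Icc (a := -m) (b := m))
    intro y hy
    apply hgz
    rw [Set.mem_Icc] at hy
    push_neg at hy
    rcases le_or_gt (-m) y with h1 | h1
    · have := hy h1
      calc m < y := this
        _ ≤ |y| := le_abs_self y
    · calc m < -y := by linarith
        _ ≤ |y| := neg_le_abs y
  have hint : Integrable g volume := hgc.integrable_of_hasCompactSupport hcs
  -- the majorant
  set qq : ℝ → ℝ := fun y => (1 + abs (s - |y|)) ^ (-(1+b)) with hqqdef
  have hqqc : Continuous qq := by
    apply cont_rpow_pos _ (by fun_prop)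
    intro y; have := abs_nonneg (s - |y|); linarith
  have hqq0 : ∀ y, 0 ≤ qq y := fun y => Real.rpow_nonneg (by
    have := abs_nonneg (s - |y|); linarith) _
  set K0 : ℝ := (CW * M ^ p * ((1+s) ^ (-(p * min a 0))
      * Real.log (s + 3*R) ^ (if a = 0 then p else (0:ℝ))))
      * ((R+3) ^ |1+a| * (1+s) ^ (-(1+a))) * (4:ℝ) ^ |1+b| with hK0def
  have hK0 : 0 ≤ K0 := by
    apply mul_nonneg (mul_nonneg _ _) hK3.le
    · apply mul_nonneg (mul_nonneg hCW.le (Real.rpow_nonneg hM _)) _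
      exact mul_nonneg (Real.rpow_nonneg h1s.le _) (Real.rpow_nonneg (by linarith) _)
    · exact mul_nonneg hK2.le (Real.rpow_nonneg h1s.le _)
  -- step 1-3 : interval integral ≤ K0 * ∫_{Icc} qq
  have step1 : (∫ y in (x - t + s)..(x + t - s), g y) ≤ ∫ y, g y := by
    rw [intervalIntegral.integral_of_le (by linarith : x - t + s ≤ x + t - s)]
    exact setIntegral_le_integral hint (ae_of_all _ hg0)
  have step2 : (∫ y, g y) = ∫ y in Set.Icc (-m) m, g y := by
    have hc0 : (∫ y in (Set.Icc (-m) m)ᶜ, g y) = 0 := by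
      apply setIntegral_eq_zero_of_forall_eq_zero
      intro y hy
      apply hgz
      rw [Set.mem_compl_iff, Set.mem_Icc] at hy
      push_neg at hy
      rcases le_or_gt (-m) y with h1 | h1
      · exact lt_of_lt_of_le (hy h1) (le_abs_self y)
      · exact lt_of_lt_of_le (by linarith) (neg_le_abs y)
    rw [← integral_add_compl (measurableSet_Icc (a := -m) (b := m)) hint, hc0, add_zero]
  have step3 : (∫ y in Set.Icc (-m) m, g y) ≤ ∫ y in Set.Icc (-m) m, K0 * qq y := by
    apply setIntegral_mono_on hint.integrableOn
      ((continuous_const.mul hqqc).integrableOn_Icc) measurableSet_Icc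
    intro y hy
    rw [Set.mem_Icc] at hy
    have hym : |y| ≤ s + R := by
      rw [abs_le]; exact ⟨by rw [hmdef] at hy; linarith [hy.1], by rw [hmdef] at hy; linarith [hy.2]⟩
    have e1 := HW T U M hM hbd y s hs hsT hym
    have e2 := F1part (a := a) hR hs hym
    have e3 := F2part (b := b) (y := y) (s := s)
    have n1 : (0:ℝ) ≤ jap (s + jap y) ^ (-(1+a)) := Real.rpow_nonneg (jap_pos _).le _
    have n2 : (0:ℝ) ≤ jap (s - jap y) ^ (-(1+b)) := Real.rpow_nonneg (jap_pos _).le _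
    have n1' : (0:ℝ) ≤ (R+3) ^ |1+a| * (1+s) ^ (-(1+a)) :=
      mul_nonneg hK2.le (Real.rpow_nonneg h1s.le _)
    have nW : (0:ℝ) ≤ CW * M ^ p * ((1+s) ^ (-(p * min a 0))
        * Real.log (s + 3*R) ^ (if a = 0 then p else (0:ℝ))) := by
      apply mul_nonneg (mul_nonneg hCW.le (Real.rpow_nonneg hM _))
      exact mul_nonneg (Real.rpow_nonneg h1s.le _) (Real.rpow_nonneg (by linarith) _)
    have hUp0 : (0:ℝ) ≤ |U y s| ^ p := Real.rpow_nonneg (abs_nonneg _) _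
    calc g y = |U y s| ^ p * jap (s + jap y) ^ (-(1+a)) * jap (s - jap y) ^ (-(1+b)) := by
          show |U y s| ^ p * cweight a b y s = _
          rw [cweight]; ring
      _ ≤ (CW * M ^ p * ((1+s) ^ (-(p * min a 0))
              * Real.log (s + 3*R) ^ (if a = 0 then p else (0:ℝ))))
            * ((R+3) ^ |1+a| * (1+s) ^ (-(1+a)))
            * ((4:ℝ) ^ |1+b| * (1 + abs (s - |y|)) ^ (-(1+b))) := by
          apply mul_le_mul _ e3 n2 (mul_nonneg nW n1')
          exact mul_le_mul e1 e2 n1 nW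
      _ = K0 * qq y := by rw [hK0def, hqqdef]; ring
  have step4 : (∫ y in Set.Icc (-m) m, K0 * qq y) = K0 * ∫ y in Set.Icc (-m) m, qq y :=
    integral_const_mul K0 qq
  have step5 : (∫ y in Set.Icc (-m) m, qq y) ≤ CQ * (if b = 0 then Real.log (s + 3*R)
      else (1+s) ^ (-(min b 0))) := by
    have e1 : (∫ y in Set.Icc (-m) m, qq y) = ∫ y in (-m)..m, qq y := by
      rw [intervalIntegral.integral_of_le (by linarith : -m ≤ m), integral_Icc_eq_integral_Ioc]
    rw [e1]
    exact HQ s hs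
  -- combine
  have hQb0 : (0:ℝ) ≤ (if b = 0 then Real.log (s + 3*R) else (1+s) ^ (-(min b 0))) := by
    split_ifs
    · linarith
    · exact Real.rpow_nonneg h1s.le _
  have main : (∫ y in (x - t + s)..(x + t - s), g y)
      ≤ K0 * (CQ * (if b = 0 then Real.log (s + 3*R) else (1+s) ^ (-(min b 0)))) := by
    calc (∫ y in (x - t + s)..(x + t - s), g y) ≤ ∫ y, g y := step1
      _ = ∫ y in Set.Icc (-m) m, g y := step2
      _ ≤ ∫ y in Set.Icc (-m) m, K0 * qq y := step3
      _ = K0 * ∫ y in Set.Icc (-m) m, qq y := step4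
      _ ≤ K0 * (CQ * _) := mul_le_mul_of_nonneg_left step5 hK0
  refine main.trans (le_of_eq ?_)
  rw [hK0def]
  have hL0 : (0:ℝ) < Real.log (s + 3*R) := by linarith
  by_cases hb : b = 0
  · subst hb
    rw [if_pos rfl, if_pos rfl]
    rw [min_self (0:ℝ)] -- min 0 0 = 0 for b part? careful: min b 0 with b = 0
    rw [Real.rpow_add hL0, Real.rpow_one]
    rw [show -(1+a) - p * min a 0 - 0 = (-(p * min a 0)) + (-(1+a)) by ring]
    rw [Real.rpow_add h1s]
    ring
  · rw [if_neg hb, if_neg hb, add_zero]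
    rw [show -(1+a) - p * min a 0 - min b 0
      = (-(p * min a 0)) + (-(1+a)) + (-(min b 0)) by ring]
    rw [Real.rpow_add h1s, Real.rpow_add h1s]
    ring

lemma duhamel_bound (p a b R : ℝ) (hp : 1 < p) (hR : 1 < R) :
    ∃ C, 0 < C ∧ ∀ (T : ℝ), 0 < T → ∀ (U : ℝ → ℝ → ℝ),
      ContinuousOn (fun q : ℝ × ℝ => U q.1 q.2) (Set.univ ×ˢ Set.Icc 0 T) →
      (∀ x t : ℝ, 0 ≤ t → t ≤ T → t + R < |x| → U x t = 0) →
      ∀ M : ℝ, 0 ≤ M →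
      (∀ x t : ℝ, 0 ≤ t → t ≤ T → wfun a R x t * |U x t| ≤ M) →
      ∀ x t : ℝ, 0 ≤ t → t ≤ T →
      |duhamel a b (fun y s => |U y s| ^ p) x t|
        ≤ C * M ^ p *
          (if (-(1+a) - p * min a 0 - min b 0) < -1 then 1
           else if (-(1+a) - p * min a 0 - min b 0) = -1 then
             Real.log (t + 3*R) ^ (((if a = 0 then p else (0:ℝ)) + (if b = 0 then (1:ℝ) else 0)) + 1)
           else (1+t) ^ ((-(1+a) - p * min a 0 - min b 0) + 1)
             * Real.log (t + 3*R) ^ ((if a = 0 then p else (0:ℝ)) + (if b = 0 then (1:ℝ) else 0))) := by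
  set EE : ℝ := -(1+a) - p * min a 0 - min b 0 with hEEdef
  set QQ : ℝ := (if a = 0 then p else (0:ℝ)) + (if b = 0 then (1:ℝ) else 0) with hQQdef
  have hQQ0 : 0 ≤ QQ := by
    rw [hQQdef]
    apply add_nonneg <;> split_ifs <;> norm_num <;> linarith
  obtain ⟨C1, hC1, H1⟩ := inner_bound p a b R hp hR
  obtain ⟨C2, hC2, H2⟩ := powlog_integral R EE QQ hR hQQ0
  refine ⟨C1 * C2, mul_pos hC1 hC2, fun T hT U hU hsupp M hM hbd x t ht htT => ?_⟩
  have hL0 : (0:ℝ) ≤ Real.log (t + 3*R) := Real.log_nonneg (by linarith)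
  have hpe0 : (0:ℝ) ≤ (if EE < -1 then 1 else if EE = -1 then Real.log (t + 3*R) ^ (QQ+1)
      else (1+t) ^ (EE+1) * Real.log (t + 3*R) ^ QQ) := by
    split_ifs
    · norm_num
    · exact Real.rpow_nonneg hL0 _
    · exact mul_nonneg (Real.rpow_nonneg (by linarith) _) (Real.rpow_nonneg hL0 _)
  have hRHS0 : (0:ℝ) ≤ C1 * C2 * M ^ p *
      (if EE < -1 then 1 else if EE = -1 then Real.log (t + 3*R) ^ (QQ+1)
      else (1+t) ^ (EE+1) * Real.log (t + 3*R) ^ QQ) := by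
    apply mul_nonneg (mul_nonneg (by positivity) (Real.rpow_nonneg hM _)) hpe0
  set inn : ℝ → ℝ := fun s => ∫ y in (x - t + s)..(x + t - s),
      (|U y s| ^ p) * cweight a b y s with hinndef
  have hinn0 : ∀ s ∈ Set.Icc (0:ℝ) t, 0 ≤ inn s := by
    intro s hs
    apply intervalIntegral.integral_nonneg (by linarith [hs.1, hs.2] : x - t + s ≤ x + t - s)
    intro y _
    exact mul_nonneg (Real.rpow_nonneg (abs_nonneg _) _) (cweight_nonneg a b y s)
  have hd : duhamel a b (fun y s => |U y s| ^ p) x t = (∫ s in (0:ℝ)..t, inn s) / 2 := rfl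
  have hint0 : 0 ≤ ∫ s in (0:ℝ)..t, inn s := intervalIntegral.integral_nonneg ht hinn0
  rw [hd, abs_of_nonneg (by linarith)]
  by_cases hII : IntervalIntegrable inn volume 0 t
  · have hmaj : ∀ s ∈ Set.Icc (0:ℝ) t,
        inn s ≤ (C1 * M ^ p) * ((1+s) ^ EE * Real.log (s + 3*R) ^ QQ) := by
      intro s hs
      have := H1 T hT U hU hsupp M hM hbd x t s hs.1 hs.2 htT
      calc inn s ≤ C1 * M ^ p * ((1+s) ^ EE * Real.log (s + 3*R) ^ QQ) := this
        _ = (C1 * M ^ p) * ((1+s) ^ EE * Real.log (s + 3*R) ^ QQ) := by ring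
    have hstep : (∫ s in (0:ℝ)..t, inn s)
        ≤ (C1 * M ^ p) * ∫ s in (0:ℝ)..t, (1+s) ^ EE * Real.log (s + 3*R) ^ QQ := by
      rw [← intervalIntegral.integral_const_mul]
      exact intervalIntegral.integral_mono_on ht hII
        ((intervalIntegrable_powlog hR ht).const_mul _) hmaj
    have hstep2 := H2 t ht
    have : (∫ s in (0:ℝ)..t, inn s) ≤ (C1 * M ^ p) * (C2 *
        (if EE < -1 then 1 else if EE = -1 then Real.log (t + 3*R) ^ (QQ+1)
        else (1+t) ^ (EE+1) * Real.log (t + 3*R) ^ QQ)) := by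
      apply hstep.trans
      apply mul_le_mul_of_nonneg_left hstep2 (by positivity)
    calc (∫ s in (0:ℝ)..t, inn s) / 2 ≤ (∫ s in (0:ℝ)..t, inn s) := by linarith
      _ ≤ _ := by
        apply this.trans (le_of_eq ?_)
        ring
  · rw [intervalIntegral.integral_undef hII]
    simpa using hRHS0

lemma wfun_le_a0 {R x t : ℝ} (hR : 1 < R) (ht : 0 ≤ t) :
    wfun 0 R x t ≤ (Real.log (t + 3*R))⁻¹ := by
  unfold wfun
  rw [if_neg (lt_irrefl 0), if_pos rfl]
  have h0 : (0:ℝ) < Real.log (t + 3*R) := by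
    have := one_lt_logR hR ht; linarith
  apply inv_anti₀ h0
  apply Real.log_le_log (by linarith)
  have := abs_nonneg x; linarith

lemma wfun_le_aneg {a R x t : ℝ} (ha : a < 0) (hR : 1 < R) (ht : 0 ≤ t) :
    wfun a R x t ≤ (1+t) ^ a := by
  unfold wfun
  rw [if_neg (by linarith), if_neg ha.ne]
  apply Real.rpow_le_rpow_of_nonpos (by linarith)
  · have := abs_nonneg x; linarith
  · exact ha.le

lemma wfun_peF_bound (p a b R : ℝ) (hp : 1 < p) (hR : 1 < R)
    (hab : (0 < a + b ∧ 0 < a) ∨ (a = 0 ∧ 0 < b) ∨ (a + b = 0 ∧ 0 < a) ∨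
      (a = 0 ∧ b = 0) ∨ (a < 0 ∧ 0 < b) ∨ (a < 0 ∧ b = 0) ∨ (a < 0 ∧ b < 0) ∨
      (a = 0 ∧ b < 0) ∨ (a + b < 0 ∧ 0 < a)) :
    ∃ C, 0 < C ∧ ∀ T, 0 < T → ∀ t, 0 ≤ t → t ≤ T → ∀ x : ℝ,
      wfun a R x t *
        (if (-(1+a) - p * min a 0 - min b 0) < -1 then 1
         else if (-(1+a) - p * min a 0 - min b 0) = -1 then
           Real.log (t + 3*R) ^ (((if a = 0 then p else (0:ℝ)) + (if b = 0 then (1:ℝ) else 0)) + 1)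
         else (1+t) ^ ((-(1+a) - p * min a 0 - min b 0) + 1)
           * Real.log (t + 3*R) ^ ((if a = 0 then p else (0:ℝ)) + (if b = 0 then (1:ℝ) else 0)))
        ≤ C * E2 p a b R T := by
  rcases hab with ⟨h1, h2⟩ | ⟨h1, h2⟩ | ⟨h1, h2⟩ | ⟨h1, h2⟩ | ⟨h1, h2⟩ | ⟨h1, h2⟩ |
    ⟨h1, h2⟩ | ⟨h1, h2⟩ | ⟨h1, h2⟩
  · -- case 1 : 0 < a+b, 0 < a
    refine ⟨1, one_pos, fun T hT t ht htT x => ?_⟩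
    have hma : min a 0 = 0 := min_eq_right h2.le
    rw [hma]
    have hEE : -(1+a) - p * 0 - min b 0 < -1 := by
      rcases le_total b 0 with hb | hb
      · rw [min_eq_left hb]; nlinarith
      · rw [min_eq_right hb]; nlinarith
    rw [if_pos hEE]
    unfold wfun E2
    rw [if_pos h2, if_pos ⟨h1, h2⟩]
  · -- case 2 : a = 0, 0 < b
    subst h1
    refine ⟨1, one_pos, fun T hT t ht htT x => ?_⟩
    have hLt : 1 < Real.log (t + 3*R) := one_lt_logR hR ht
    have hLT : 1 < Real.log (T + 3*R) := one_lt_logR hR (ht.trans htT)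
    have hmono : Real.log (t + 3*R) ≤ Real.log (T + 3*R) :=
      Real.log_le_log (by linarith) (by linarith)
    rw [min_self (0:ℝ), min_eq_right h2.le]
    rw [if_neg (by norm_num), if_pos (by norm_num), if_pos rfl, if_neg h2.ne']
    unfold E2
    rw [if_neg (by rintro ⟨u, v⟩; linarith), if_pos ⟨rfl, h2⟩, one_mul]
    calc wfun 0 R x t * Real.log (t + 3*R) ^ (p + 0 + 1)
        ≤ (Real.log (t + 3*R))⁻¹ * Real.log (t + 3*R) ^ (p + 0 + 1) := by
          apply mul_le_mul_of_nonneg_right (wfun_le_a0 hR ht)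
            (Real.rpow_nonneg (by linarith) _)
      _ = Real.log (t + 3*R) ^ p := by
          rw [← Real.rpow_neg_one (Real.log (t + 3*R)), ← Real.rpow_add (by linarith)]
          norm_num
      _ ≤ Real.log (T + 3*R) ^ p :=
          Real.rpow_le_rpow (by linarith) hmono (by linarith)
  · -- case 3 : a + b = 0, 0 < a
    refine ⟨1, one_pos, fun T hT t ht htT x => ?_⟩
    have hb : b < 0 := by linarith
    have hLt : 1 < Real.log (t + 3*R) := one_lt_logR hR ht
    rw [min_eq_right h2.le, min_eq_left hb.le]
    rw [if_neg (by push_neg; linarith), if_pos (by linarith), if_neg h2.ne', if_neg hb.ne]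
    unfold wfun E2
    rw [if_pos h2]
    rw [if_neg (by rintro ⟨u, v⟩; linarith), if_neg (by rintro ⟨u, v⟩; linarith),
      if_pos ⟨h1, h2⟩, one_mul, one_mul]
    rw [show (0:ℝ) + 0 + 1 = 1 by norm_num, Real.rpow_one]
    exact Real.log_le_log (by linarith) (by linarith)
  · -- case 4 : a = 0, b = 0
    subst h1; subst h2
    refine ⟨1, one_pos, fun T hT t ht htT x => ?_⟩
    have hLt : 1 < Real.log (t + 3*R) := one_lt_logR hR ht
    have hmono : Real.log (t + 3*R) ≤ Real.log (T + 3*R) :=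
      Real.log_le_log (by linarith) (by linarith)
    rw [min_self (0:ℝ)]
    rw [if_neg (by norm_num), if_pos (by norm_num), if_pos rfl, if_pos rfl]
    unfold E2
    rw [if_neg (by rintro ⟨u, v⟩; linarith), if_neg (by rintro ⟨u, v⟩; linarith),
      if_neg (by rintro ⟨u, v⟩; linarith), if_pos ⟨rfl, rfl⟩, one_mul]
    calc wfun 0 R x t * Real.log (t + 3*R) ^ (p + 1 + 1)
        ≤ (Real.log (t + 3*R))⁻¹ * Real.log (t + 3*R) ^ (p + 1 + 1) := by
          apply mul_le_mul_of_nonneg_right (wfun_le_a0 hR ht)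
            (Real.rpow_nonneg (by linarith) _)
      _ = Real.log (t + 3*R) ^ (p + 1) := by
          rw [← Real.rpow_neg_one (Real.log (t + 3*R)), ← Real.rpow_add (by linarith)]
          norm_num
      _ ≤ Real.log (T + 3*R) ^ (p + 1) :=
          Real.rpow_le_rpow (by linarith) hmono (by linarith)
  · -- case 5 : a < 0, 0 < b
    refine ⟨1, one_pos, fun T hT t ht htT x => ?_⟩
    have h1t : (0:ℝ) < 1 + t := by linarith
    rw [min_eq_left h1.le, min_eq_right h2.le]
    rw [if_neg (by push_neg; nlinarith), if_neg (by nlinarith), if_neg h1.ne, if_neg h2.ne']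
    unfold E2
    rw [if_neg (by rintro ⟨u, v⟩; linarith), if_neg (by rintro ⟨u, v⟩; linarith),
      if_neg (by rintro ⟨u, v⟩; linarith), if_neg (by rintro ⟨u, v⟩; linarith),
      if_pos ⟨h1, h2⟩, one_mul]
    rw [show (0:ℝ) + 0 = 0 by norm_num, Real.rpow_zero, mul_one]
    calc wfun a R x t * (1+t) ^ (-(1+a) - p * a - 0 + 1)
        ≤ (1+t) ^ a * (1+t) ^ (-(1+a) - p * a - 0 + 1) := by
          apply mul_le_mul_of_nonneg_right (wfun_le_aneg h1 hR ht)
            (Real.rpow_nonneg h1t.le _)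
      _ = (1+t) ^ (-(p * a)) := by
          rw [← Real.rpow_add h1t]; congr 1; ring
      _ ≤ (T + 2*R) ^ (-(p * a)) :=
          Real.rpow_le_rpow h1t.le (by linarith) (by nlinarith)
  · -- case 6 : a < 0, b = 0
    subst h2
    refine ⟨1, one_pos, fun T hT t ht htT x => ?_⟩
    have h1t : (0:ℝ) < 1 + t := by linarith
    have hLt : 1 < Real.log (t + 3*R) := one_lt_logR hR ht
    have hLT : 1 < Real.log (T + 3*R) := one_lt_logR hR (ht.trans htT)
    have hmono : Real.log (t + 3*R) ≤ Real.log (T + 3*R) :=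
      Real.log_le_log (by linarith) (by linarith)
    rw [min_eq_left h1.le, min_self (0:ℝ)]
    rw [if_neg (by push_neg; nlinarith), if_neg (by nlinarith), if_neg h1.ne, if_pos rfl]
    unfold E2
    rw [if_neg (by rintro ⟨u, v⟩; linarith), if_neg (by rintro ⟨u, v⟩; linarith),
      if_neg (by rintro ⟨u, v⟩; linarith), if_neg (by rintro ⟨u, v⟩; linarith),
      if_neg (by rintro ⟨u, v⟩; linarith), if_pos ⟨h1, rfl⟩, one_mul]
    rw [show (0:ℝ) + 1 = 1 by norm_num, Real.rpow_one]
    have hstep : wfun a R x t * ((1+t) ^ (-(1+a) - p * a - 0 + 1) * Real.log (t + 3*R))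
        ≤ (1+t) ^ (-(p*a)) * Real.log (t + 3*R) := by
      have e1 : (1+t) ^ a * ((1+t) ^ (-(1+a) - p * a - 0 + 1)) = (1+t) ^ (-(p*a)) := by
        rw [← Real.rpow_add h1t]; congr 1; ring
      calc wfun a R x t * ((1+t) ^ (-(1+a) - p * a - 0 + 1) * Real.log (t + 3*R))
          ≤ (1+t) ^ a * ((1+t) ^ (-(1+a) - p * a - 0 + 1) * Real.log (t + 3*R)) := by
            apply mul_le_mul_of_nonneg_right (wfun_le_aneg h1 hR ht)
            exact mul_nonneg (Real.rpow_nonneg h1t.le _) (by linarith)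
        _ = (1+t) ^ (-(p*a)) * Real.log (t + 3*R) := by rw [← mul_assoc, e1]
    apply hstep.trans
    apply mul_le_mul
    · exact Real.rpow_le_rpow h1t.le (by linarith) (by nlinarith)
    · exact hmono
    · linarith
    · exact Real.rpow_nonneg (by linarith) _
  · -- case 7 : a < 0, b < 0
    refine ⟨1, one_pos, fun T hT t ht htT x => ?_⟩
    have h1t : (0:ℝ) < 1 + t := by linarith
    rw [min_eq_left h1.le, min_eq_left h2.le]
    rw [if_neg (by push_neg; nlinarith), if_neg (by nlinarith), if_neg h1.ne, if_neg h2.ne]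
    unfold E2
    rw [if_neg (by rintro ⟨u, v⟩; linarith), if_neg (by rintro ⟨u, v⟩; linarith),
      if_neg (by rintro ⟨u, v⟩; linarith), if_neg (by rintro ⟨u, v⟩; linarith),
      if_neg (by rintro ⟨u, v⟩; linarith), if_neg (by rintro ⟨u, v⟩; linarith),
      if_pos ⟨h1, h2⟩, one_mul]
    rw [show (0:ℝ) + 0 = 0 by norm_num, Real.rpow_zero, mul_one]
    calc wfun a R x t * (1+t) ^ (-(1+a) - p * a - b + 1)
        ≤ (1+t) ^ a * (1+t) ^ (-(1+a) - p * a - b + 1) := by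
          apply mul_le_mul_of_nonneg_right (wfun_le_aneg h1 hR ht)
            (Real.rpow_nonneg h1t.le _)
      _ = (1+t) ^ (-(p * a + b)) := by
          rw [← Real.rpow_add h1t]; congr 1; ring
      _ ≤ (T + 2*R) ^ (-(p * a + b)) :=
          Real.rpow_le_rpow h1t.le (by linarith) (by nlinarith)
  · -- case 8 : a = 0, b < 0
    subst h1
    refine ⟨1, one_pos, fun T hT t ht htT x => ?_⟩
    have h1t : (0:ℝ) < 1 + t := by linarith
    have hLt : 1 < Real.log (t + 3*R) := one_lt_logR hR ht
    have hLT : 1 < Real.log (T + 3*R) := one_lt_logR hR (ht.trans htT)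
    have hmono : Real.log (t + 3*R) ≤ Real.log (T + 3*R) :=
      Real.log_le_log (by linarith) (by linarith)
    rw [min_self (0:ℝ), min_eq_left h2.le]
    rw [if_neg (by push_neg; nlinarith), if_neg (by intro h; nlinarith [h]), if_pos rfl,
      if_neg h2.ne]
    unfold E2
    rw [if_neg (by rintro ⟨u, v⟩; linarith), if_neg (by rintro ⟨u, v⟩; linarith),
      if_neg (by rintro ⟨u, v⟩; linarith), if_neg (by rintro ⟨u, v⟩; linarith),
      if_neg (by rintro ⟨u, v⟩; linarith), if_neg (by rintro ⟨u, v⟩; linarith),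
      if_neg (by rintro ⟨u, v⟩; linarith), if_pos ⟨rfl, h2⟩, one_mul]
    have e1 : (Real.log (t + 3*R))⁻¹ * ((1+t) ^ (-(1+0) - p * 0 - b + 1)
          * Real.log (t + 3*R) ^ (p + 0))
        = (1+t) ^ (-b) * Real.log (t + 3*R) ^ (p - 1) := by
      rw [← Real.rpow_neg_one (Real.log (t + 3*R)),
        show (-(1+(0:ℝ)) - p * 0 - b + 1) = -b by ring, mul_left_comm,
        ← Real.rpow_add (by linarith : (0:ℝ) < Real.log (t + 3*R)),
        show -1 + (p + 0) = p - 1 by ring]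
    calc wfun 0 R x t * ((1+t) ^ (-(1+0) - p * 0 - b + 1) * Real.log (t + 3*R) ^ (p + 0))
        ≤ (Real.log (t + 3*R))⁻¹ * ((1+t) ^ (-(1+0) - p * 0 - b + 1)
            * Real.log (t + 3*R) ^ (p + 0)) := by
          apply mul_le_mul_of_nonneg_right (wfun_le_a0 hR ht)
          exact mul_nonneg (Real.rpow_nonneg h1t.le _) (Real.rpow_nonneg (by linarith) _)
      _ = (1+t) ^ (-b) * Real.log (t + 3*R) ^ (p - 1) := e1
      _ ≤ Real.log (T + 3*R) ^ (p - 1) * (T + R) ^ (-b) := by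
          rw [mul_comm]
          apply mul_le_mul
          · exact Real.rpow_le_rpow (by linarith) hmono (by linarith)
          · exact Real.rpow_le_rpow h1t.le (by linarith) (by linarith)
          · exact Real.rpow_nonneg h1t.le _
          · exact Real.rpow_nonneg (by linarith) _
  · -- case 9 : a + b < 0, 0 < a
    refine ⟨1, one_pos, fun T hT t ht htT x => ?_⟩
    have h1t : (0:ℝ) < 1 + t := by linarith
    have hb : b < 0 := by linarith
    rw [min_eq_right h2.le, min_eq_left hb.le]
    rw [if_neg (by push_neg; nlinarith), if_neg (by nlinarith), if_neg h2.ne', if_neg hb.ne]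
    unfold wfun E2
    rw [if_pos h2]
    rw [if_neg (by rintro ⟨u, v⟩; linarith), if_neg (by rintro ⟨u, v⟩; linarith),
      if_neg (by rintro ⟨u, v⟩; linarith), if_neg (by rintro ⟨u, v⟩; linarith),
      if_neg (by rintro ⟨u, v⟩; linarith), if_neg (by rintro ⟨u, v⟩; linarith),
      if_neg (by rintro ⟨u, v⟩; linarith), if_neg (by rintro ⟨u, v⟩; linarith),
      one_mul, one_mul]
    rw [show (0:ℝ) + 0 = 0 by norm_num, Real.rpow_zero, mul_one]
    calc (1+t) ^ (-(1+a) - p * 0 - b + 1) = (1+t) ^ (-(a+b)) := by congr 1; ring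
      _ ≤ (T + 2*R) ^ (-(a+b)) :=
          Real.rpow_le_rpow h1t.le (by linarith) (by linarith)

/-- Lemma 4.2 (weighted a priori estimate): `‖L(|U|^p)‖₂ ≤ C₃ ‖U‖₂^p E₂(T)`,
formulated via an arbitrary bound `M` for `‖U‖₂ = sup_{ℝ×[0,T]} w(|x|,t)|U(x,t)|`. -/
theorem weighted_apriori_estimate_E2 (p a b R : ℝ)
    (hp : 1 < p) (hR : 1 < R)
    (hab : (0 < a + b ∧ 0 < a) ∨ (a = 0 ∧ 0 < b) ∨ (a + b = 0 ∧ 0 < a) ∨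
      (a = 0 ∧ b = 0) ∨ (a < 0 ∧ 0 < b) ∨ (a < 0 ∧ b = 0) ∨ (a < 0 ∧ b < 0) ∨
      (a = 0 ∧ b < 0) ∨ (a + b < 0 ∧ 0 < a)) :
    ∃ C₃ > 0, ∀ T : ℝ, 0 < T → ∀ U : ℝ → ℝ → ℝ,
      ContinuousOn (fun q : ℝ × ℝ => U q.1 q.2) (Set.univ ×ˢ Set.Icc 0 T) →
      (∀ x t : ℝ, 0 ≤ t → t ≤ T → t + R < |x| → U x t = 0) →
      ∀ M : ℝ, 0 ≤ M →
      (∀ x t : ℝ, 0 ≤ t → t ≤ T → wfun a R x t * |U x t| ≤ M) →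
      ∀ x t : ℝ, 0 ≤ t → t ≤ T →
        wfun a R x t * |duhamel a b (fun y s => |U y s| ^ p) x t|
          ≤ C₃ * M ^ p * E2 p a b R T := by
  obtain ⟨C1, hC1, H1⟩ := duhamel_bound p a b R hp hR
  obtain ⟨C2, hC2, H2⟩ := wfun_peF_bound p a b R hp hR hab
  refine ⟨C1 * C2, mul_pos hC1 hC2, fun T hT U hU hsupp M hM hbd x t ht htT => ?_⟩
  have h1 := H1 T hT U hU hsupp M hM hbd x t ht htT
  have h2 := H2 T hT t ht htT x
  have hw0 : 0 ≤ wfun a R x t := (wfun_pos hR ht).le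
  have hMp : 0 ≤ M ^ p := Real.rpow_nonneg hM p
  set Z : ℝ := (if (-(1+a) - p * min a 0 - min b 0) < -1 then 1
    else if (-(1+a) - p * min a 0 - min b 0) = -1 then
      Real.log (t + 3*R) ^ (((if a = 0 then p else (0:ℝ)) + (if b = 0 then (1:ℝ) else 0)) + 1)
    else (1+t) ^ ((-(1+a) - p * min a 0 - min b 0) + 1)
      * Real.log (t + 3*R) ^ ((if a = 0 then p else (0:ℝ)) + (if b = 0 then (1:ℝ) else 0)))
    with hZ
  calc wfun a R x t * |duhamel a b (fun y s => |U y s| ^ p) x t|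
      ≤ wfun a R x t * (C1 * M ^ p * Z) := mul_le_mul_of_nonneg_left h1 hw0
    _ = C1 * M ^ p * (wfun a R x t * Z) := by ring
    _ ≤ C1 * M ^ p * (C2 * E2 p a b R T) :=
        mul_le_mul_of_nonneg_left h2 (mul_nonneg hC1.le hMp)
    _ = C1 * C2 * M ^ p * E2 p a b R T := by ring

end
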